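/- Let a, b ∈ ℝ. The lattice equation with polynomial E(w,x,y,z) = (w-y+a)(x-z+a) + y - x + b, i.e. (u_{n,m}-u_{n,m+1}+a)(u_{n+1,m}-u_{n+1,m+1}+a) + u_{n,m+1} - u_{n+1,m} + b = 0, admits the five-point generalized symmetry with generator g_{n,m} = (u_{n+1,m} - u_{n,m} - a - b)(u_{n,m} - u_{n-1,m} - a - b): for every solution u : ℤ × ℤ → ℝ of the equation and every (n,m) ∈ ℤ², the linearized equation g_{n,m}·∂₁E + g_{n+1,m}·∂₂E + g_{n,m+1}·∂₃E + g_{n+1,m+1}·∂₄E = 0 holds, where each ∂ᵢE is evaluated at (u_{n,m}, u_{n+1,m}, u_{n,m+1}, u_{n+1,m+1}). -/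

import Mathlib

private lemma dW (y a c x b t : ℝ) :
    deriv (fun w : ℝ => (w - y + a) * c + y - x + b) t = c := by
  have h1 : HasDerivAt (fun w : ℝ => (w - y + a) * c) (1 * c) t :=
    (((hasDerivAt_id t).sub_const y).add_const a).mul_const c
  have h2 : HasDerivAt (fun w : ℝ => w - y + a) 1 t := by
    exact ((hasDerivAt_id t).sub_const y).add_const a
  have h : HasDerivAt (fun w : ℝ => (w - y + a) * c + y - x + b) (1 * c) t := by
    have := (h1.add_const y).sub_const x |>.add_const b
    convert this using 2 <;> ring
  exact h.deriv.trans (by ring)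

private lemma dX (p a z y b t : ℝ) :
    deriv (fun x : ℝ => p * (x - z + a) + y - x + b) t = p - 1 := by
  have h1 : HasDerivAt (fun x : ℝ => p * (x - z + a)) (p * 1) t :=
    (((hasDerivAt_id t).sub_const z).add_const a).const_mul p
  have h2 : HasDerivAt (fun x : ℝ => y - x + b) (-1) t := by
    simpa using ((hasDerivAt_id t).const_sub y).add_const b
  have h : HasDerivAt (fun x : ℝ => p * (x - z + a) + y - x + b) (p * 1 + -1) t := by
    have := h1.add h2
    convert this using 2 <;> first | rfl | (simp only [Pi.add_apply]; ring)
  exact h.deriv.trans (by ring)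

private lemma dY (w a c x b t : ℝ) :
    deriv (fun y : ℝ => (w - y + a) * c + y - x + b) t = -c + 1 := by
  have h1 : HasDerivAt (fun y : ℝ => (w - y + a) * c) (-1 * c) t :=
    (((hasDerivAt_id t).const_sub w).add_const a).mul_const c
  have h2 : HasDerivAt (fun y : ℝ => y - x + b) 1 t := by
    simpa using (hasDerivAt_id t).sub_const x |>.add_const b
  have h : HasDerivAt (fun y : ℝ => (w - y + a) * c + y - x + b) (-1 * c + 1) t := by
    have := h1.add h2
    convert this using 2 <;> first | rfl | (simp only [Pi.add_apply]; ring)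
  exact h.deriv.trans (by ring)

private lemma dZ (p a y x b t : ℝ) :
    deriv (fun z : ℝ => p * (x - z + a) + y - x + b) t = -p := by
  have h1 : HasDerivAt (fun z : ℝ => p * (x - z + a)) (p * -1) t :=
    (((hasDerivAt_id t).const_sub x).add_const a).const_mul p
  have h : HasDerivAt (fun z : ℝ => p * (x - z + a) + y - x + b) (p * -1) t := by
    have := (h1.add_const y).sub_const x |>.add_const b
    convert this using 2 <;> ring
  exact h.deriv.trans (by ring)

theorem stmt_8
    (a b : ℝ)
    (E : ℝ → ℝ → ℝ → ℝ → ℝ)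
    (hE : ∀ w x y z : ℝ, E w x y z = (w - y + a) * (x - z + a) + y - x + b)
    (u : ℤ × ℤ → ℝ)
    (hu : ∀ n m : ℤ, E (u (n, m)) (u (n + 1, m)) (u (n, m + 1)) (u (n + 1, m + 1)) = 0)
    (g : ℤ × ℤ → ℝ)
    (hg : ∀ n m : ℤ, g (n, m) = (u (n + 1, m) - u (n, m) - a - b) * (u (n, m) - u (n - 1, m) - a - b))
    (n m : ℤ) :
    g (n, m) * deriv (fun w => E w (u (n + 1, m)) (u (n, m + 1)) (u (n + 1, m + 1))) (u (n, m))
      + g (n + 1, m) * deriv (fun x => E (u (n, m)) x (u (n, m + 1)) (u (n + 1, m + 1))) (u (n + 1, m))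
      + g (n, m + 1) * deriv (fun y => E (u (n, m)) (u (n + 1, m)) y (u (n + 1, m + 1))) (u (n, m + 1))
      + g (n + 1, m + 1) * deriv (fun z => E (u (n, m)) (u (n + 1, m)) (u (n, m + 1)) z) (u (n + 1, m + 1)) = 0 := by
  have hi1 : n - 1 + 1 = n := by ring
  have hi2 : n + 1 - 1 = n := by ring
  have e0 := hu (n - 1) m
  have e1 := hu n m
  have e2 := hu (n + 1) m
  rw [hi1] at e0
  simp only [hE] at e0 e1 e2
  have g1 := hg n m
  have g2 := hg (n + 1) m
  have g3 := hg n (m + 1)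
  have g4 := hg (n + 1) (m + 1)
  rw [hi2] at g2 g4
  -- abbreviations
  set x0 := u (n - 1, m)
  set x1 := u (n, m)
  set x2 := u (n + 1, m)
  set x3 := u (n + 1 + 1, m)
  set y0 := u (n - 1, m + 1)
  set y1 := u (n, m + 1)
  set y2 := u (n + 1, m + 1)
  set y3 := u (n + 1 + 1, m + 1)
  have hP0 : x1 - x0 - a - b = (x0 - y0 + a) * ((x1 - y1 + a) - 1) := by linear_combination -e0
  have hP1 : x2 - x1 - a - b = (x1 - y1 + a) * ((x2 - y2 + a) - 1) := by linear_combination -e1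
  have hP2 : x3 - x2 - a - b = (x2 - y2 + a) * ((x3 - y3 + a) - 1) := by linear_combination -e2
  have hQ1 : y1 - y0 - a - b = (x1 - y1 + a) * ((x0 - y0 + a) - 1) := by linear_combination -e0
  have hQ2 : y2 - y1 - a - b = (x2 - y2 + a) * ((x1 - y1 + a) - 1) := by linear_combination -e1
  have hQ3 : y3 - y2 - a - b = (x3 - y3 + a) * ((x2 - y2 + a) - 1) := by linear_combination -e2
  simp only [hE]
  rw [dW, dX, dY, dZ, g1, g2, g3, g4, hP0, hP1, hP2, hQ1, hQ2, hQ3]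
  ring
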